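/- (PEVI pessimism.) Let f_0^- ≡ 0, and for k = 1, …, K let f̂_k, b_k : S×A → ℝ with b_k ≥ 0 satisfy the valid-confidence-interval condition |f̂_k(s,a) − (T f_{k−1}^-)(s,a)| ≤ b_k(s,a) for all (s,a), where f_k^- := f̂_k − b_k, and let π_k be a greedy policy with respect to f_k^-. Define the non-stationary Q-functions by Q_0 ≡ 0 and Q_k^{π_{k−1:1}} = T^{π_{k−1}} Q_{k−1}^{π_{k−2:1}} (with Q_1 = R). Then for every k = 1, …, K and every (s,a), f_k^-(s,a) ≤ Q_k^{π_{k−1:1}}(s,a). -/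

import Mathlib

open scoped BigOperators

noncomputable section

/-- The policy-specific Bellman operator. -/
def bellmanOp {S A : Type*} [Fintype S] [Fintype A] (P : S → A → S → ℝ)
    (R : S → A → ℝ) (γ : ℝ) (pol : S → A → ℝ) (f : S → A → ℝ) : S → A → ℝ :=
  fun s a => R s a + γ * ∑ s', P s a s' * ∑ a', pol s' a' * f s' a'

/-- The Bellman optimality operator. -/
def bellmanOptOp {S A : Type*} [Fintype S] [Fintype A] [Nonempty A]
    (P : S → A → S → ℝ) (R : S → A → ℝ) (γ : ℝ) (f : S → A → ℝ) : S → A → ℝ :=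
  fun s a => R s a + γ * ∑ s',
    P s a s' * Finset.univ.sup' Finset.univ_nonempty (fun a' => f s' a')

/-- Non-stationary Q-functions: `Q_0 ≡ 0` and
`Q_k^{π_{k−1:1}} = T^{π_{k−1}} Q_{k−1}^{π_{k−2:1}}` (so `Q_1 = R`). -/
def Qns {S A : Type*} [Fintype S] [Fintype A] (P : S → A → S → ℝ)
    (R : S → A → ℝ) (γ : ℝ) (pols : ℕ → S → A → ℝ) : ℕ → S → A → ℝ
  | 0 => fun _ _ => 0
  | (k + 1) => bellmanOp P R γ (pols k) (Qns P R γ pols k)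

/-- **PEVI pessimism.** With `f_0⁻ ≡ 0`, `f_k⁻ = f̂_k − b_k`, valid confidence
intervals `|f̂_k − T f_{k−1}⁻| ≤ b_k` with `b_k ≥ 0`, and `π_k` greedy w.r.t. `f_k⁻`
(for `k = 1, …, K`), we have `f_k⁻(s,a) ≤ Q_k^{π_{k−1:1}}(s,a)` for all `k = 1, …, K`
and all `(s,a)`. -/
theorem pevi_pessimism {S A : Type*} [Fintype S] [Fintype A] [Nonempty A]
    (P : S → A → S → ℝ) (R : S → A → ℝ) (Rmax γ : ℝ)
    (hP0 : ∀ s a s', 0 ≤ P s a s') (hP1 : ∀ s a, ∑ s', P s a s' = 1)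
    (hR : ∀ s a, 0 ≤ R s a ∧ R s a ≤ Rmax)
    (hγ0 : 0 ≤ γ) (hγ1 : γ < 1)
    (K : ℕ)
    (fhat b fminus : ℕ → S → A → ℝ)
    (hf0 : ∀ s a, fminus 0 s a = 0)
    (hfk : ∀ k, 1 ≤ k → k ≤ K → ∀ s a, fminus k s a = fhat k s a - b k s a)
    (hb : ∀ k, 1 ≤ k → k ≤ K → ∀ s a, 0 ≤ b k s a)
    (hCI : ∀ k, 1 ≤ k → k ≤ K → ∀ s a,
      |fhat k s a - bellmanOptOp P R γ (fminus (k - 1)) s a| ≤ b k s a)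
    (pols : ℕ → S → A → ℝ)
    (hpols0 : ∀ k s a, 0 ≤ pols k s a) (hpols1 : ∀ k s, ∑ a, pols k s a = 1)
    (hgreedy : ∀ k, 1 ≤ k → k ≤ K → ∀ s a, 0 < pols k s a →
      ∀ a', fminus k s a' ≤ fminus k s a) :
    ∀ k, 1 ≤ k → k ≤ K → ∀ s a, fminus k s a ≤ Qns P R γ pols k s a := by

  intro k
  induction k with
  | zero => intro h; omega
  | succ k ih =>
    intro _ hkK s a
    have hk1 : 1 ≤ k + 1 := Nat.le_add_left 1 k
    have hCI' := hCI (k + 1) hk1 hkK s a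
    simp only [Nat.add_sub_cancel] at hCI'
    have h1 : fminus (k + 1) s a ≤ bellmanOptOp P R γ (fminus k) s a := by
      rw [hfk (k + 1) hk1 hkK s a]
      have h := abs_le.mp hCI'
      linarith [h.1]
    refine h1.trans ?_
    have hinner : ∀ s', (Finset.univ.sup' Finset.univ_nonempty (fun a' => fminus k s' a'))
        ≤ ∑ a', pols k s' a' * Qns P R γ pols k s' a' := by
      intro s'
      rcases Nat.eq_zero_or_pos k with hk | hk
      · subst hk
        simp [hf0, Qns]
      · have hkK' : k ≤ K := Nat.le_of_succ_le hkK
        set M := Finset.univ.sup' Finset.univ_nonempty (fun a' => fminus k s' a') with hM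
        have step1 : M ≤ ∑ a', pols k s' a' * fminus k s' a' := by
          calc M = ∑ a', pols k s' a' * M := by
                rw [← Finset.sum_mul, hpols1, one_mul]
            _ ≤ ∑ a', pols k s' a' * fminus k s' a' := by
                apply Finset.sum_le_sum
                intro a' _
                rcases (hpols0 k s' a').eq_or_lt with h0 | h0
                · rw [← h0]; simp
                · apply mul_le_mul_of_nonneg_left _ (le_of_lt h0)
                  apply Finset.sup'_le
                  intro a'' _
                  exact hgreedy k hk hkK' s' a' h0 a''
        refine step1.trans (Finset.sum_le_sum fun a' _ => ?_)
        exact mul_le_mul_of_nonneg_left (ih hk hkK' s' a') (hpols0 k s' a')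
    show R s a + γ * ∑ s', P s a s' * _ ≤ R s a + γ * ∑ s', P s a s' * _
    apply add_le_add_right
    apply mul_le_mul_of_nonneg_left _ hγ0
    exact Finset.sum_le_sum fun s' _ =>
      mul_le_mul_of_nonneg_left (hinner s') (hP0 s a s')
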